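/- Let A be an associative unital ℚ-algebra and let (J0, Jp, Jm, P) be an osp(1,2)-realization in A. In A ⊗ A ⊗ A, with the intermediate Casimirs Γ_S for subsets S of {1,2,3} as defined in the context, each single-index Casimir Γ_i (i = 1, 2, 3) commutes with each two-index Casimir Γ_{j,k} (for every two-element subset {j,k} of {1,2,3}). -/

import Mathlib

set_option maxHeartbeats 1000000

open scoped TensorProduct

private lemma core_commute {R : Type*} [Ring R] [Algebra ℚ R] (a0 ap am p : R)
    (h1 : a0*ap - ap*a0 = ap)
    (h2 : a0*am - am*a0 = -am)
    (h3 : ap*am + am*ap = 2*a0)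
    (h4 : a0*p = p*a0)
    (h5 : ap*p + p*ap = 0)
    (h6 : am*p + p*am = 0) :
    Commute (a0*p - ap*am*p - (1/2:ℚ)•p) a0 ∧
    Commute (a0*p - ap*am*p - (1/2:ℚ)•p) ap ∧
    Commute (a0*p - ap*am*p - (1/2:ℚ)•p) am ∧
    Commute (a0*p - ap*am*p - (1/2:ℚ)•p) p := by
  set c : R := (1/2:ℚ)•(1:R) with hcdef
  have hc : ∀ x : R, c*x = x*c := fun x => by
    rw [hcdef, smul_mul_assoc, mul_smul_comm, one_mul, mul_one]
  have hcc : c + c = 1 := by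
    rw [hcdef, ← add_smul]; norm_num
  set S : R := a0 - ap*am - c with hS
  have hΓ : a0*p - ap*am*p - (1/2:ℚ)•p = S * p := by
    rw [hS, hcdef]; noncomm_ring
  have hsp : S*ap + ap*S = 0 := by
    rw [hS]; linear_combination (norm := noncomm_ring) h1 - ap*h3 - hcc*ap + hc ap
  have hsm : S*am + am*S = 0 := by
    rw [hS]; linear_combination (norm := noncomm_ring) -h2 - h3*am - hcc*am + hc am
  have hs0 : S*a0 = a0*S := by
    rw [hS]; linear_combination (norm := noncomm_ring) h1*am + ap*h2 - hc a0
  have hsP : S*p = p*S := by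
    rw [hS]; linear_combination (norm := noncomm_ring) h4 - ap*h6 + h5*am - hc p
  rw [hΓ]
  refine ⟨?_, ?_, ?_, ?_⟩
  · show S*p*a0 = a0*(S*p)
    linear_combination (norm := noncomm_ring) -(S*h4) + hs0*p
  · show S*p*ap = ap*(S*p)
    linear_combination (norm := noncomm_ring) S*h5 - hsp*p
  · show S*p*am = am*(S*p)
    linear_combination (norm := noncomm_ring) S*h6 - hsm*p
  · show S*p*p = p*(S*p)
    linear_combination (norm := noncomm_ring) hsP*p

private lemma assemble_commute {R : Type*} [Ring R] [Algebra ℚ R]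
    (Γ g1 g2 u1 u2 v1 v2 q : R)
    (c1 : Commute Γ g1) (c2 : Commute Γ g2) (cu1 : Commute Γ u1) (cu2 : Commute Γ u2)
    (cv1 : Commute Γ v1) (cv2 : Commute Γ v2) (cq : Commute Γ q) :
    Commute Γ ((g1 + g2) * q - (u1 + u2) * (v1 + v2) * q - (1/2:ℚ) • q) :=
  (((c1.add_right c2).mul_right cq).sub_right
    (((cu1.add_right cu2).mul_right (cv1.add_right cv2)).mul_right cq)).sub_right
      (cq.smul_right (1/2:ℚ))

/-- Each single-index Casimir Γi (i = 1,2,3) commutes with each two-index Casimir Γjk. -/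
theorem single_casimirs_commute {A : Type*} [Ring A] [Algebra ℚ A]
    (J0 Jp Jm P : A)
    (h1 : J0*Jp - Jp*J0 = Jp)
    (h2 : J0*Jm - Jm*J0 = -Jm)
    (h3 : Jp*Jm + Jm*Jp = 2*J0)
    (h4 : J0*P = P*J0)
    (h5 : Jp*P + P*Jp = 0)
    (h6 : Jm*P + P*Jm = 0)
    (h7 : P^2 = 1) :
    -- intermediate Casimir operators Γ_S in A ⊗ A ⊗ A for subsets S of {1,2,3}
    let Γ1 : A ⊗[ℚ] (A ⊗[ℚ] A) :=
      (J0 ⊗ₜ[ℚ] ((1:A) ⊗ₜ[ℚ] (1:A))) * (P ⊗ₜ[ℚ] ((1:A) ⊗ₜ[ℚ] (1:A)))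
        - (Jp ⊗ₜ[ℚ] ((1:A) ⊗ₜ[ℚ] (1:A))) * (Jm ⊗ₜ[ℚ] ((1:A) ⊗ₜ[ℚ] (1:A))) * (P ⊗ₜ[ℚ] ((1:A) ⊗ₜ[ℚ] (1:A)))
        - (1/2 : ℚ) • (P ⊗ₜ[ℚ] ((1:A) ⊗ₜ[ℚ] (1:A)))
    let Γ2 : A ⊗[ℚ] (A ⊗[ℚ] A) :=
      ((1:A) ⊗ₜ[ℚ] (J0 ⊗ₜ[ℚ] (1:A))) * ((1:A) ⊗ₜ[ℚ] (P ⊗ₜ[ℚ] (1:A)))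
        - ((1:A) ⊗ₜ[ℚ] (Jp ⊗ₜ[ℚ] (1:A))) * ((1:A) ⊗ₜ[ℚ] (Jm ⊗ₜ[ℚ] (1:A))) * ((1:A) ⊗ₜ[ℚ] (P ⊗ₜ[ℚ] (1:A)))
        - (1/2 : ℚ) • ((1:A) ⊗ₜ[ℚ] (P ⊗ₜ[ℚ] (1:A)))
    let Γ3 : A ⊗[ℚ] (A ⊗[ℚ] A) :=
      ((1:A) ⊗ₜ[ℚ] ((1:A) ⊗ₜ J0)) * ((1:A) ⊗ₜ[ℚ] ((1:A) ⊗ₜ P))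
        - ((1:A) ⊗ₜ[ℚ] ((1:A) ⊗ₜ Jp)) * ((1:A) ⊗ₜ[ℚ] ((1:A) ⊗ₜ Jm)) * ((1:A) ⊗ₜ[ℚ] ((1:A) ⊗ₜ P))
        - (1/2 : ℚ) • ((1:A) ⊗ₜ[ℚ] ((1:A) ⊗ₜ P))
    let Γ12 : A ⊗[ℚ] (A ⊗[ℚ] A) :=
      (J0 ⊗ₜ[ℚ] ((1:A) ⊗ₜ[ℚ] (1:A)) + (1:A) ⊗ₜ[ℚ] (J0 ⊗ₜ[ℚ] (1:A))) * (P ⊗ₜ[ℚ] (P ⊗ₜ[ℚ] (1:A)))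
        - (Jp ⊗ₜ[ℚ] (P ⊗ₜ[ℚ] (1:A)) + (1:A) ⊗ₜ[ℚ] (Jp ⊗ₜ[ℚ] (1:A)))
            * (Jm ⊗ₜ[ℚ] (P ⊗ₜ[ℚ] (1:A)) + (1:A) ⊗ₜ[ℚ] (Jm ⊗ₜ[ℚ] (1:A))) * (P ⊗ₜ[ℚ] (P ⊗ₜ[ℚ] (1:A)))
        - (1/2 : ℚ) • (P ⊗ₜ[ℚ] (P ⊗ₜ[ℚ] (1:A)))
    let Γ13 : A ⊗[ℚ] (A ⊗[ℚ] A) :=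
      (J0 ⊗ₜ[ℚ] ((1:A) ⊗ₜ[ℚ] (1:A)) + (1:A) ⊗ₜ[ℚ] ((1:A) ⊗ₜ J0)) * (P ⊗ₜ[ℚ] ((1:A) ⊗ₜ P))
        - (Jp ⊗ₜ[ℚ] (P ⊗ₜ P) + (1:A) ⊗ₜ[ℚ] ((1:A) ⊗ₜ Jp))
            * (Jm ⊗ₜ[ℚ] (P ⊗ₜ P) + (1:A) ⊗ₜ[ℚ] ((1:A) ⊗ₜ Jm)) * (P ⊗ₜ[ℚ] ((1:A) ⊗ₜ P))
        - (1/2 : ℚ) • (P ⊗ₜ[ℚ] ((1:A) ⊗ₜ P))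
    let Γ23 : A ⊗[ℚ] (A ⊗[ℚ] A) :=
      ((1:A) ⊗ₜ[ℚ] (J0 ⊗ₜ[ℚ] (1:A)) + (1:A) ⊗ₜ[ℚ] ((1:A) ⊗ₜ J0)) * ((1:A) ⊗ₜ[ℚ] (P ⊗ₜ P))
        - ((1:A) ⊗ₜ[ℚ] (Jp ⊗ₜ P) + (1:A) ⊗ₜ[ℚ] ((1:A) ⊗ₜ Jp))
            * ((1:A) ⊗ₜ[ℚ] (Jm ⊗ₜ P) + (1:A) ⊗ₜ[ℚ] ((1:A) ⊗ₜ Jm)) * ((1:A) ⊗ₜ[ℚ] (P ⊗ₜ P))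
        - (1/2 : ℚ) • ((1:A) ⊗ₜ[ℚ] (P ⊗ₜ P))
    let Γ123 : A ⊗[ℚ] (A ⊗[ℚ] A) :=
      (J0 ⊗ₜ[ℚ] ((1:A) ⊗ₜ[ℚ] (1:A)) + (1:A) ⊗ₜ[ℚ] (J0 ⊗ₜ[ℚ] (1:A)) + (1:A) ⊗ₜ[ℚ] ((1:A) ⊗ₜ J0))
          * (P ⊗ₜ[ℚ] (P ⊗ₜ P))
        - (Jp ⊗ₜ[ℚ] (P ⊗ₜ P) + (1:A) ⊗ₜ[ℚ] (Jp ⊗ₜ P) + (1:A) ⊗ₜ[ℚ] ((1:A) ⊗ₜ Jp))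
            * (Jm ⊗ₜ[ℚ] (P ⊗ₜ P) + (1:A) ⊗ₜ[ℚ] (Jm ⊗ₜ P) + (1:A) ⊗ₜ[ℚ] ((1:A) ⊗ₜ Jm))
            * (P ⊗ₜ[ℚ] (P ⊗ₜ P))
        - (1/2 : ℚ) • (P ⊗ₜ[ℚ] (P ⊗ₜ P))
    (Γ1*Γ12 = Γ12*Γ1 ∧ Γ1*Γ13 = Γ13*Γ1 ∧ Γ1*Γ23 = Γ23*Γ1) ∧ (Γ2*Γ12 = Γ12*Γ2 ∧ Γ2*Γ13 = Γ13*Γ2 ∧ Γ2*Γ23 = Γ23*Γ2) ∧ (Γ3*Γ12 = Γ12*Γ3 ∧ Γ3*Γ13 = Γ13*Γ3 ∧ Γ3*Γ23 = Γ23*Γ3) := by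
  intro Γ1 Γ2 Γ3 Γ12 Γ13 Γ23 Γ123
  obtain ⟨cx0, cxp, cxm, cxP⟩ := core_commute J0 Jp Jm P h1 h2 h3 h4 h5 h6
  set x : A := J0*P - Jp*Jm*P - (1/2:ℚ)•P with hx
  -- transporters: commuting in A transfers slotwise
  have k1 : ∀ z : A, Commute x z →
      Commute (x ⊗ₜ[ℚ] ((1:A) ⊗ₜ[ℚ] (1:A))) (z ⊗ₜ[ℚ] ((1:A) ⊗ₜ[ℚ] (1:A))) := by
    intro z h
    show _ * _ = _ * _
    simp only [Algebra.TensorProduct.tmul_mul_tmul, one_mul, mul_one, h.eq]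
  have k2 : ∀ z : A, Commute x z →
      Commute ((1:A) ⊗ₜ[ℚ] (x ⊗ₜ[ℚ] (1:A))) ((1:A) ⊗ₜ[ℚ] (z ⊗ₜ[ℚ] (1:A))) := by
    intro z h
    show _ * _ = _ * _
    simp only [Algebra.TensorProduct.tmul_mul_tmul, one_mul, mul_one, h.eq]
  have k3 : ∀ z : A, Commute x z →
      Commute ((1:A) ⊗ₜ[ℚ] ((1:A) ⊗ₜ[ℚ] x)) ((1:A) ⊗ₜ[ℚ] ((1:A) ⊗ₜ[ℚ] z)) := by
    intro z h
    show _ * _ = _ * _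
    simp only [Algebra.TensorProduct.tmul_mul_tmul, one_mul, mul_one, h.eq]
  -- cross-slot commutation (purely different slots)
  have q1 : ∀ w : A ⊗[ℚ] A, Commute (x ⊗ₜ[ℚ] ((1:A) ⊗ₜ[ℚ] (1:A))) ((1:A) ⊗ₜ[ℚ] w) := by
    intro w
    show _ * _ = _ * _
    simp [Algebra.TensorProduct.tmul_mul_tmul, ← Algebra.TensorProduct.one_def]
  have q2a : ∀ y z : A, Commute ((1:A) ⊗ₜ[ℚ] (y ⊗ₜ[ℚ] (1:A))) (z ⊗ₜ[ℚ] ((1:A) ⊗ₜ[ℚ] (1:A))) := by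
    intro y z
    show _ * _ = _ * _
    simp [Algebra.TensorProduct.tmul_mul_tmul]
  have q2b : ∀ y z : A, Commute ((1:A) ⊗ₜ[ℚ] (y ⊗ₜ[ℚ] (1:A))) ((1:A) ⊗ₜ[ℚ] ((1:A) ⊗ₜ[ℚ] z)) := by
    intro y z
    show _ * _ = _ * _
    simp [Algebra.TensorProduct.tmul_mul_tmul]
  have q3 : ∀ y u v : A, Commute ((1:A) ⊗ₜ[ℚ] ((1:A) ⊗ₜ[ℚ] y)) (u ⊗ₜ[ℚ] (v ⊗ₜ[ℚ] (1:A))) := by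
    intro y u v
    show _ * _ = _ * _
    simp [Algebra.TensorProduct.tmul_mul_tmul]
  -- universal generator commutation lemmas
  have C1 : ∀ u : A, Commute x u → ∀ w : A ⊗[ℚ] A,
      Commute (x ⊗ₜ[ℚ] ((1:A) ⊗ₜ[ℚ] (1:A))) (u ⊗ₜ[ℚ] w) := by
    intro u hu w
    rw [show u ⊗ₜ[ℚ] w
        = (u ⊗ₜ[ℚ] ((1:A) ⊗ₜ[ℚ] (1:A))) * ((1:A) ⊗ₜ[ℚ] w) by
      simp [Algebra.TensorProduct.tmul_mul_tmul, ← Algebra.TensorProduct.one_def]]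
    exact (k1 u hu).mul_right (q1 w)
  have C2 : ∀ v : A, Commute x v → ∀ u w : A,
      Commute ((1:A) ⊗ₜ[ℚ] (x ⊗ₜ[ℚ] (1:A))) (u ⊗ₜ[ℚ] (v ⊗ₜ[ℚ] w)) := by
    intro v hv u w
    rw [show u ⊗ₜ[ℚ] (v ⊗ₜ[ℚ] w)
        = (u ⊗ₜ[ℚ] ((1:A) ⊗ₜ[ℚ] (1:A))) * ((1:A) ⊗ₜ[ℚ] (v ⊗ₜ[ℚ] (1:A)))
            * ((1:A) ⊗ₜ[ℚ] ((1:A) ⊗ₜ[ℚ] w)) by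
      simp [Algebra.TensorProduct.tmul_mul_tmul]]
    exact ((q2a x u).mul_right (k2 v hv)).mul_right (q2b x w)
  have C3 : ∀ w : A, Commute x w → ∀ u v : A,
      Commute ((1:A) ⊗ₜ[ℚ] ((1:A) ⊗ₜ[ℚ] x)) (u ⊗ₜ[ℚ] (v ⊗ₜ[ℚ] w)) := by
    intro w hw u v
    rw [show u ⊗ₜ[ℚ] (v ⊗ₜ[ℚ] w)
        = (u ⊗ₜ[ℚ] (v ⊗ₜ[ℚ] (1:A))) * ((1:A) ⊗ₜ[ℚ] ((1:A) ⊗ₜ[ℚ] w)) by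
      simp [Algebra.TensorProduct.tmul_mul_tmul]]
    exact (q3 x u v).mul_right (k3 w hw)
  have hone : Commute x (1:A) := Commute.one_right x
  -- expressing Γ1, Γ2, Γ3 as single-slot elements
  have e1 : Γ1 = x ⊗ₜ[ℚ] ((1:A) ⊗ₜ[ℚ] (1:A)) := by
    unfold Γ1
    rw [hx]
    simp [Algebra.TensorProduct.tmul_mul_tmul, TensorProduct.sub_tmul, TensorProduct.smul_tmul']
  have e2 : Γ2 = (1:A) ⊗ₜ[ℚ] (x ⊗ₜ[ℚ] (1:A)) := by
    unfold Γ2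
    rw [hx]
    simp [Algebra.TensorProduct.tmul_mul_tmul, TensorProduct.sub_tmul, TensorProduct.tmul_sub,
      TensorProduct.smul_tmul', TensorProduct.tmul_smul]
    rw [TensorProduct.smul_tmul, TensorProduct.smul_tmul']
  have e3 : Γ3 = (1:A) ⊗ₜ[ℚ] ((1:A) ⊗ₜ[ℚ] x) := by
    unfold Γ3
    rw [hx]
    simp [Algebra.TensorProduct.tmul_mul_tmul, TensorProduct.sub_tmul, TensorProduct.tmul_sub,
      TensorProduct.smul_tmul', TensorProduct.tmul_smul]
    rw [TensorProduct.smul_tmul, TensorProduct.smul_tmul']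
  refine ⟨⟨?_, ?_, ?_⟩, ⟨?_, ?_, ?_⟩, ⟨?_, ?_, ?_⟩⟩
  · -- Γ1 vs Γ12
    rw [e1]; unfold Γ12
    exact (assemble_commute _ _ _ _ _ _ _ _
      (C1 J0 cx0 _) (C1 1 hone _) (C1 Jp cxp _) (C1 1 hone _)
      (C1 Jm cxm _) (C1 1 hone _) (C1 P cxP _)).eq
  · -- Γ1 vs Γ13
    rw [e1]; unfold Γ13
    exact (assemble_commute _ _ _ _ _ _ _ _
      (C1 J0 cx0 _) (C1 1 hone _) (C1 Jp cxp _) (C1 1 hone _)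
      (C1 Jm cxm _) (C1 1 hone _) (C1 P cxP _)).eq
  · -- Γ1 vs Γ23
    rw [e1]; unfold Γ23
    exact (assemble_commute _ _ _ _ _ _ _ _
      (C1 1 hone _) (C1 1 hone _) (C1 1 hone _) (C1 1 hone _)
      (C1 1 hone _) (C1 1 hone _) (C1 1 hone _)).eq
  · -- Γ2 vs Γ12
    rw [e2]; unfold Γ12
    exact (assemble_commute _ _ _ _ _ _ _ _
      (C2 1 hone _ _) (C2 J0 cx0 _ _) (C2 P cxP _ _) (C2 Jp cxp _ _)
      (C2 P cxP _ _) (C2 Jm cxm _ _) (C2 P cxP _ _)).eq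
  · -- Γ2 vs Γ13
    rw [e2]; unfold Γ13
    exact (assemble_commute _ _ _ _ _ _ _ _
      (C2 1 hone _ _) (C2 1 hone _ _) (C2 P cxP _ _) (C2 1 hone _ _)
      (C2 P cxP _ _) (C2 1 hone _ _) (C2 1 hone _ _)).eq
  · -- Γ2 vs Γ23
    rw [e2]; unfold Γ23
    exact (assemble_commute _ _ _ _ _ _ _ _
      (C2 J0 cx0 _ _) (C2 1 hone _ _) (C2 Jp cxp _ _) (C2 1 hone _ _)
      (C2 Jm cxm _ _) (C2 1 hone _ _) (C2 P cxP _ _)).eq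
  · -- Γ3 vs Γ12
    rw [e3]; unfold Γ12
    exact (assemble_commute _ _ _ _ _ _ _ _
      (C3 1 hone _ _) (C3 1 hone _ _) (C3 1 hone _ _) (C3 1 hone _ _)
      (C3 1 hone _ _) (C3 1 hone _ _) (C3 1 hone _ _)).eq
  · -- Γ3 vs Γ13
    rw [e3]; unfold Γ13
    exact (assemble_commute _ _ _ _ _ _ _ _
      (C3 1 hone _ _) (C3 J0 cx0 _ _) (C3 P cxP _ _) (C3 Jp cxp _ _)
      (C3 P cxP _ _) (C3 Jm cxm _ _) (C3 P cxP _ _)).eq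
  · -- Γ3 vs Γ23
    rw [e3]; unfold Γ23
    exact (assemble_commute _ _ _ _ _ _ _ _
      (C3 1 hone _ _) (C3 J0 cx0 _ _) (C3 P cxP _ _) (C3 Jp cxp _ _)
      (C3 P cxP _ _) (C3 Jm cxm _ _) (C3 P cxP _ _)).eq
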